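/- arXiv:math/0508050 — 2 statements merged into one kernel-verified Lean document; each statement's English description precedes it below -/
import Mathlib

section
/- Let G be a finitely generated subgroup of the group of orientation-preserving homeomorphisms of the circle S¹, and suppose the set P of all points of S¹ whose G-orbit is finite is nonempty and finite. Then for every x ∈ S¹ ∖ P at least one of the following holds: (1) O(x) is dense in rg(x); (2) every accumulation point of O(x) lies in P; (3) there exists a G-invariant set K contained in the closure of rg(x) that is nonempty, compact, perfect and nowhere dense in S¹ (a Cantor set), such that O(x) ⊆ K, O(x) is dense in K, and K is contained in the closure of O(y) for every y ∈ rg(x); (4) the closure of O(x) contains a nonempty proper subset that is G-invariant, closed in the subspace topology of S¹ ∖ P, and disjoint from O(x). -/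
open Set Topology Filter

/-- The circle `S¹`, as `ℝ/ℤ`. -/
abbrev S1 := AddCircle (1 : ℝ)

/-- The group of homeomorphisms of the circle (composition as multiplication). -/
noncomputable instance : Group (S1 ≃ₜ S1) where
  mul f g := g.trans f
  one := Homeomorph.refl _
  inv f := f.symm
  mul_assoc f g h := rfl
  one_mul f := Homeomorph.ext fun _ => rfl
  mul_one f := Homeomorph.ext fun _ => rfl
  inv_mul_cancel f := Homeomorph.ext fun x => f.symm_apply_apply x

/-- A homeomorphism of the circle is orientation-preserving if it lifts to an increasing
homeomorphism of `ℝ` commuting with translation by `1`. -/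
def OrientPres (g : S1 ≃ₜ S1) : Prop :=
  ∃ F : ℝ ≃o ℝ, (∀ x : ℝ, F (x + 1) = F x + 1) ∧ ∀ x : ℝ, g (x : S1) = ((F x : ℝ) : S1)

/-- The `G`-orbit of a point `x ∈ S¹`. -/
def orbit (G : Subgroup (S1 ≃ₜ S1)) (x : S1) : Set S1 :=
  {y | ∃ g ∈ G, g x = y}

/-- The range `rg(x)`: the union of those connected components of `S¹ ∖ P` meeting the
orbit of `x`. -/
def rg (G : Subgroup (S1 ≃ₜ S1)) (P : Set S1) (x : S1) : Set S1 :=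
  ⋃ y ∈ orbit G x, connectedComponentIn Pᶜ y

namespace Stmt4Proof

open Metric

/-! ### Topological facts about the circle -/

lemma s1_coe_continuous : Continuous ((↑) : ℝ → S1) := continuous_quotient_mk'

lemma s1_isOpenMap : IsOpenMap ((↑) : ℝ → S1) := QuotientAddGroup.isOpenMap_coe

lemma s1_coe_surjective : Function.Surjective ((↑) : ℝ → S1) := QuotientAddGroup.mk_surjective

lemma s1_map_nhds (u : ℝ) : Filter.map ((↑) : ℝ → S1) (𝓝 u) = 𝓝 ((u : ℝ) : S1) :=
  (QuotientAddGroup.isOpenQuotientMap_mk).map_nhds_eq u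

lemma s1_coe_int (m : ℤ) : ((m : ℝ) : S1) = 0 :=
  (AddCircle.coe_eq_zero_iff 1).mpr ⟨m, by simp⟩

lemma s1_coe_add_int (t : ℝ) (m : ℤ) : ((t + m : ℝ) : S1) = (t : S1) := by
  rw [AddCircle.coe_add, s1_coe_int, add_zero]

lemma s1_coe_eq_coe {s t : ℝ} (h : (s : S1) = t) : ∃ m : ℤ, t = s + m := by
  have : ((s - t : ℝ) : S1) = 0 := by rw [AddCircle.coe_sub, h, sub_self]
  obtain ⟨n, hn⟩ := (AddCircle.coe_eq_zero_iff 1).mp this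
  exact ⟨-n, by push_cast; simp at hn ⊢; linarith⟩

instance : LocallyConnectedSpace S1 := by
  rw [locallyConnectedSpace_iff_subsets_isOpen_isConnected]
  intro z U hU
  obtain ⟨u, rfl⟩ := s1_coe_surjective z
  have hpre : ((↑) : ℝ → S1) ⁻¹' U ∈ 𝓝 u := by
    rw [← s1_map_nhds u] at hU; exact hU
  obtain ⟨δ, hδ, hball⟩ := Metric.mem_nhds_iff.mp hpre
  refine ⟨((↑) : ℝ → S1) '' ball u δ, ?_, s1_isOpenMap _ isOpen_ball, ⟨u, mem_ball_self hδ, rfl⟩, ?_⟩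
  · exact (image_mono hball).trans (image_preimage_subset _ _)
  · exact ⟨⟨_, ⟨u, mem_ball_self hδ, rfl⟩⟩,
      ((convex_ball u δ).isPreconnected).image _ s1_coe_continuous.continuousOn⟩

lemma s1_sphere_subset_pair (x : S1) {r : ℝ} (h0 : 0 < r) :
    Metric.sphere x r ⊆ {x + ((r : ℝ) : S1), x + ((-r : ℝ) : S1)} := by
  intro z hz
  have hd : ‖z - x‖ = r := by
    rw [← dist_eq_norm]
    simpa [Metric.mem_sphere, dist_eq_norm] using hz
  obtain ⟨t, ht⟩ := s1_coe_surjective (z - x)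
  rw [← ht, AddCircle.norm_eq] at hd
  simp only [inv_one, one_mul, mul_one] at hd
  have habs : t - round t = r ∨ t - round t = -r := (abs_eq h0.le).mp hd
  have hz' : z = x + ((t - round t : ℝ) : S1) := by
    have : ((t - round t : ℝ) : S1) = ((t : ℝ) : S1) := by
      rw [sub_eq_add_neg, ← Int.cast_neg, s1_coe_add_int]
    rw [this, ht]; abel
  rcases habs with h | h
  · left; rw [hz', h]
  · right; rw [hz', h]; rfl

/-- The frontier of a proper open connected subset of the circle has at most two points. -/
lemma frontier_subset_pair {E : Set S1} (hE : IsPreconnected E) (hEo : IsOpen E)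
    (hne : E.Nonempty) (hproper : E ≠ univ) : ∃ a b : S1, frontier E ⊆ {a, b} := by
  classical
  obtain ⟨c, hc⟩ := (ne_univ_iff_exists_notMem E).mp hproper
  obtain ⟨u, rfl⟩ := s1_coe_surjective c
  obtain ⟨e₀, he₀⟩ := hne
  obtain ⟨w₀, rfl⟩ := s1_coe_surjective e₀
  set W : Set ℝ := ((↑) : ℝ → S1) ⁻¹' E with hW
  have hWo : IsOpen W := hEo.preimage s1_coe_continuous
  have hWint : ∀ t ∈ W, ∀ m : ℤ, t + m ∈ W := by
    intro t ht m
    simpa [hW, mem_preimage, s1_coe_add_int] using ht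
  have hw₀ : w₀ ∈ W := he₀
  have huW : ∀ m : ℤ, u + (m : ℝ) ∉ W := by
    intro m h
    exact hc (by simpa [hW, mem_preimage, s1_coe_add_int] using h)
  set I : Set ℝ := connectedComponentIn W w₀ with hI
  have hIW : I ⊆ W := connectedComponentIn_subset _ _
  have hIpc : IsPreconnected I := isPreconnected_connectedComponentIn
  have hIo : IsOpen I := hWo.connectedComponentIn
  have hw₀I : w₀ ∈ I := mem_connectedComponentIn hw₀
  have hOC : I.OrdConnected := hIpc.ordConnected
  have hbddA : BddAbove I := by
    refine ⟨u + (⌈w₀ - u⌉ : ℝ), fun z hz => ?_⟩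
    by_contra hlt
    push_neg at hlt
    have h1 : w₀ ≤ u + (⌈w₀ - u⌉ : ℝ) := by
      have := Int.le_ceil (w₀ - u); linarith
    exact huW ⌈w₀ - u⌉ (hIW (hOC.out hw₀I hz ⟨h1, hlt.le⟩))
  have hbddB : BddBelow I := by
    refine ⟨u + (⌊w₀ - u⌋ : ℝ), fun z hz => ?_⟩
    by_contra hlt
    push_neg at hlt
    have h1 : u + (⌊w₀ - u⌋ : ℝ) ≤ w₀ := by
      have := Int.floor_le (w₀ - u); linarith
    exact huW ⌊w₀ - u⌋ (hIW (hOC.out hz hw₀I ⟨hlt.le, h1⟩))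
  set a := sInf I with ha
  set b := sSup I with hb
  have hne' : I.Nonempty := ⟨w₀, hw₀I⟩
  have hIab : I ⊆ Icc a b := fun z hz => ⟨csInf_le hbddB hz, le_csSup hbddA hz⟩
  have hclI : closure I ⊆ insert a (insert b I) := by
    intro z hz
    have hzab : z ∈ Icc a b := (closure_minimal hIab isClosed_Icc) hz
    rcases eq_or_ne z a with rfl | hza
    · exact mem_insert _ _
    rcases eq_or_ne z b with rfl | hzb
    · exact mem_insert_of_mem _ (mem_insert _ _)
    have h1 : a < z := lt_of_le_of_ne hzab.1 (Ne.symm hza)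
    have h2 : z < b := lt_of_le_of_ne hzab.2 hzb
    obtain ⟨i, hiI, hiz⟩ := exists_lt_of_csInf_lt hne' h1
    obtain ⟨j, hjI, hjz⟩ := exists_lt_of_lt_csSup hne' h2
    exact mem_insert_of_mem _ (mem_insert_of_mem _ (hOC.out hiI hjI ⟨hiz.le, hjz.le⟩))
  have hsub : ((↑) : ℝ → S1) '' I ⊆ E := fun z ⟨t, htI, htz⟩ => htz ▸ hIW htI
  have hclosedin : ∀ e ∈ E, e ∈ closure (((↑) : ℝ → S1) '' I) → e ∈ ((↑) : ℝ → S1) '' I := by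
    intro e heE hecl
    obtain ⟨v, rfl⟩ := s1_coe_surjective e
    have hvW : v ∈ W := heE
    set J := connectedComponentIn W v with hJ
    have hvJ : v ∈ J := mem_connectedComponentIn hvW
    have hJo : IsOpen J := hWo.connectedComponentIn
    have : (((↑) : ℝ → S1) '' J ∩ ((↑) : ℝ → S1) '' I).Nonempty := by
      rw [_root_.mem_closure_iff] at hecl
      exact hecl _ (s1_isOpenMap _ hJo) ⟨v, hvJ, rfl⟩
    obtain ⟨z, ⟨j, hjJ, hjz⟩, ⟨i, hiI, hiz⟩⟩ := this
    obtain ⟨m, hm⟩ := s1_coe_eq_coe (hjz.trans hiz.symm)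
    have hJm : (fun t => t + (m : ℝ)) '' J ⊆ I := by
      have hpc : IsPreconnected ((fun t => t + (m : ℝ)) '' J) :=
        (isPreconnected_connectedComponentIn (F := W) (x := v)).image _
          (continuous_add_right _).continuousOn
      have hiJm : i ∈ (fun t => t + (m : ℝ)) '' J := ⟨j, hjJ, hm.symm⟩
      have hsubW : (fun t => t + (m : ℝ)) '' J ⊆ W := by
        rintro _ ⟨t, htJ, rfl⟩
        exact hWint t (connectedComponentIn_subset _ _ htJ) m
      have hIi : I = connectedComponentIn W i := connectedComponentIn_eq hiI
      rw [hIi]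
      exact hpc.subset_connectedComponentIn hiJm hsubW
    refine ⟨v + m, hJm ⟨v, hvJ, rfl⟩, s1_coe_add_int v m⟩
  have hEcov : E ⊆ ((↑) : ℝ → S1) '' I ∪ (closure (((↑) : ℝ → S1) '' I))ᶜ := by
    intro e he
    by_cases h : e ∈ closure (((↑) : ℝ → S1) '' I)
    · exact Or.inl (hclosedin e he h)
    · exact Or.inr h
  have hEeq : E = ((↑) : ℝ → S1) '' I := by
    refine subset_antisymm ?_ hsub
    refine hE.subset_left_of_subset_union (s1_isOpenMap _ hIo)
      isClosed_closure.isOpen_compl ?_ hEcov ⟨(w₀ : S1), he₀, ⟨w₀, hw₀I, rfl⟩⟩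
    exact disjoint_compl_right.mono_left subset_closure
  have hcomp : IsCompact (closure I) :=
    isCompact_Icc.of_isClosed_subset isClosed_closure (closure_minimal hIab isClosed_Icc)
  have hclE : closure E ⊆ ((↑) : ℝ → S1) '' closure I := by
    refine closure_minimal ?_ ((hcomp.image s1_coe_continuous).isClosed)
    rw [hEeq]; exact image_mono subset_closure
  refine ⟨(a : S1), (b : S1), ?_⟩
  intro z hz
  rw [hEo.frontier_eq] at hz
  have : z ∈ ((↑) : ℝ → S1) '' insert a (insert b I) :=
    image_mono hclI (hclE hz.1)
  rcases this with ⟨t, ht, rfl⟩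
  rcases ht with rfl | rfl | htI
  · exact mem_insert _ _
  · exact mem_insert_of_mem _ (mem_singleton _)
  · exact absurd (hEeq ▸ ⟨t, htI, rfl⟩) hz.2

/-- A preconnected set entering a ball and leaving the corresponding closed ball
meets the sphere. -/
lemma cross_sphere {E : Set S1} (hE : IsPreconnected E) {x : S1} {r : ℝ}
    (h1 : (E ∩ ball x r).Nonempty) (h2 : ∃ t ∈ E, t ∉ closedBall x r) :
    (E ∩ sphere x r).Nonempty := by
  by_contra hcon
  rw [Set.not_nonempty_iff_eq_empty] at hcon
  have hcov : E ⊆ ball x r ∪ (closedBall x r)ᶜ := by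
    intro z hz
    rcases lt_trichotomy (dist z x) r with h | h | h
    · exact Or.inl h
    · exact absurd (eq_empty_iff_forall_notMem.mp hcon z) (fun hh => hh ⟨hz, h⟩)
    · exact Or.inr (fun hm => absurd (mem_closedBall.mp hm) (not_le.mpr h))
  obtain ⟨t, htE, htc⟩ := h2
  have := hE _ _ isOpen_ball Metric.isClosed_closedBall.isOpen_compl hcov h1 ⟨t, htE, htc⟩
  obtain ⟨z, _, hz1, hz2⟩ := this
  exact hz2 (ball_subset_closedBall hz1)

/-- In a T1 space, a set accumulating at `x` meets every neighborhood of `x`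
in an infinite set. -/
lemma accPt_inter_infinite {S : Set S1} {x : S1} (h : AccPt x (𝓟 S))
    {U : Set S1} (hU : U ∈ 𝓝 x) : (S ∩ U).Infinite := by
  by_contra hfin
  rw [Set.not_infinite] at hfin
  have hF : ((S ∩ U) \ {x}).Finite := hfin.diff
  have hx : x ∉ (S ∩ U) \ {x} := fun hmem => hmem.2 rfl
  have hV : U ∩ ((S ∩ U) \ {x})ᶜ ∈ 𝓝 x :=
    inter_mem hU (hF.isClosed.isOpen_compl.mem_nhds hx)
  obtain ⟨z, ⟨⟨hzU, hzc⟩, hzS⟩, hzx⟩ := accPt_iff_nhds.mp h _ hV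
  exact hzc ⟨⟨hzS, hzU⟩, hzx⟩

lemma accPt_of_mem_closure {S : Set S1} {x : S1} (h1 : x ∈ closure S) (h2 : x ∉ S) :
    AccPt x (𝓟 S) := by
  rw [accPt_iff_nhds]
  intro U hU
  obtain ⟨z, hz1, hz2⟩ := mem_closure_iff_nhds.mp h1 U hU
  exact ⟨z, ⟨hz1, hz2⟩, fun h => h2 (h ▸ hz2)⟩

lemma homeo_image_frontier (g : S1 ≃ₜ S1) (s : Set S1) :
    ⇑g '' frontier s = frontier (⇑g '' s) := by
  rw [frontier, frontier, Set.image_diff g.injective, g.image_closure, g.image_interior]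

/-! ### Orbits and invariance -/

variable {G : Subgroup (S1 ≃ₜ S1)}

lemma mem_orbit_self (x : S1) : x ∈ orbit G x := ⟨1, G.one_mem, rfl⟩

lemma orbit_apply {g : S1 ≃ₜ S1} (hg : g ∈ G) (x : S1) : orbit G (g x) = orbit G x := by
  ext w
  constructor
  · rintro ⟨h, hh, rfl⟩
    exact ⟨h * g, G.mul_mem hh hg, rfl⟩
  · rintro ⟨h, hh, rfl⟩
    refine ⟨h * g⁻¹, G.mul_mem hh (G.inv_mem hg), ?_⟩
    show h (g.symm (g x)) = h x
    rw [Homeomorph.symm_apply_apply]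

lemma orbit_eq_of_mem {x w : S1} (hw : w ∈ orbit G x) : orbit G w = orbit G x := by
  obtain ⟨g, hg, rfl⟩ := hw; exact orbit_apply hg x

lemma inv_of_subset {A : Set S1} (h : ∀ g : S1 ≃ₜ S1, g ∈ G → ⇑g '' A ⊆ A) :
    ∀ g : S1 ≃ₜ S1, g ∈ G → ⇑g '' A = A := by
  intro g hg
  refine (h g hg).antisymm fun z hz => ?_
  refine ⟨g.symm z, h g⁻¹ (G.inv_mem hg) ⟨z, hz, rfl⟩, g.apply_symm_apply z⟩

lemma orbit_inv (z : S1) : ∀ g : S1 ≃ₜ S1, g ∈ G → ⇑g '' orbit G z = orbit G z := by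
  apply inv_of_subset
  rintro g hg _ ⟨_, ⟨h, hh, rfl⟩, rfl⟩
  exact ⟨g * h, G.mul_mem hg hh, rfl⟩

lemma closure_orbit_inv (z : S1) :
    ∀ g : S1 ≃ₜ S1, g ∈ G → ⇑g '' closure (orbit G z) = closure (orbit G z) := by
  intro g hg
  rw [g.image_closure, orbit_inv z g hg]

lemma derivedSet_inv {A : Set S1} (hA : ∀ g : S1 ≃ₜ S1, g ∈ G → ⇑g '' A = A) :
    ∀ g : S1 ≃ₜ S1, g ∈ G → ⇑g '' derivedSet A = derivedSet A := by
  apply inv_of_subset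
  intro g hg
  have := Continuous.image_derivedSet (A := A) g.continuous g.injective
  rwa [hA g hg] at this

end Stmt4Proof

open Stmt4Proof Metric

/-- Four possibilities for orbits: with `P` the (nonempty, finite) set of
points with finite `G`-orbit and `G` finitely generated, every `x ∈ S¹ ∖ P` satisfies one of:
(1) `O(x)` dense in `rg(x)`; (2) all accumulation points of `O(x)` lie in `P`;
(3) `O(x)` lies, densely, in a `G`-invariant Cantor set `K ⊆ closure (rg x)` which is
contained in the orbit closure of every point of `rg(x)`; (4) `closure (O x)` contains a
nonempty proper `G`-invariant subset, closed in `S¹ ∖ P` and disjoint from `O(x)`. -/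
theorem stmt4 (G : Subgroup (S1 ≃ₜ S1)) (hor : ∀ g ∈ G, OrientPres g) (hfg : G.FG)
    (P : Set S1) (hP : P = {x | (orbit G x).Finite}) (hPne : P.Nonempty) (hPfin : P.Finite) :
    ∀ x : S1, x ∉ P →
      (rg G P x ⊆ closure (orbit G x)) ∨
      (∀ p : S1, AccPt p (𝓟 (orbit G x)) → p ∈ P) ∨
      (∃ K : Set S1, K ⊆ closure (rg G P x) ∧ K.Nonempty ∧ IsCompact K ∧ Perfect K ∧
        IsNowhereDense K ∧ (∀ g ∈ G, ⇑(g : S1 ≃ₜ S1) '' K = K) ∧ orbit G x ⊆ K ∧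
        K ⊆ closure (orbit G x) ∧ ∀ y ∈ rg G P x, K ⊆ closure (orbit G y)) ∨
      (∃ K : Set S1, K ⊆ closure (orbit G x) ∧ K.Nonempty ∧ K ≠ closure (orbit G x) ∧
        (∀ g ∈ G, ⇑(g : S1 ≃ₜ S1) '' K = K) ∧ K ⊆ Pᶜ ∧ closure K ∩ Pᶜ ⊆ K ∧
        Disjoint K (orbit G x)) := by
  intro x hx
  classical
  have hPclosed : IsClosed P := hPfin.isClosed
  have hPco : IsOpen (Pᶜ : Set S1) := hPclosed.isOpen_compl
  have hOx : x ∈ orbit G x := mem_orbit_self x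
  have hOinv : ∀ g : S1 ≃ₜ S1, g ∈ G → ⇑g '' orbit G x = orbit G x := orbit_inv x
  have hxinf : ¬ (orbit G x).Finite := by
    rw [hP] at hx; exact hx
  have hOP : ∀ y ∈ orbit G x, y ∈ (Pᶜ : Set S1) := by
    intro y hy hyP
    rw [hP] at hyP
    simp only [mem_setOf_eq] at hyP
    rw [orbit_eq_of_mem hy] at hyP
    exact hxinf hyP
  have hPinv : ∀ g : S1 ≃ₜ S1, g ∈ G → ⇑g '' P = P := by
    apply inv_of_subset
    rintro g hg _ ⟨z, hz, rfl⟩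
    rw [hP] at hz ⊢
    rwa [mem_setOf_eq, orbit_apply hg]
  have hPcinv : ∀ g : S1 ≃ₜ S1, g ∈ G → ⇑g '' (Pᶜ : Set S1) = Pᶜ := by
    intro g hg
    rw [Set.image_compl_eq g.bijective, hPinv g hg]
  have hCinv : ∀ g : S1 ≃ₜ S1, g ∈ G → ⇑g '' closure (orbit G x) = closure (orbit G x) :=
    closure_orbit_inv x
  have hCcinv : ∀ g : S1 ≃ₜ S1, g ∈ G →
      ⇑g '' ((closure (orbit G x))ᶜ) = (closure (orbit G x))ᶜ := by
    intro g hg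
    rw [Set.image_compl_eq g.bijective, hCinv g hg]
  have hDinv : ∀ g : S1 ≃ₜ S1, g ∈ G → ⇑g '' derivedSet (orbit G x) = derivedSet (orbit G x) :=
    derivedSet_inv hOinv
  have hOrg : orbit G x ⊆ rg G P x := fun y hy =>
    mem_iUnion₂.mpr ⟨y, hy, mem_connectedComponentIn (hOP y hy)⟩
  -- Case split on option (2)
  by_cases hA2 : ∀ p : S1, AccPt p (𝓟 (orbit G x)) → p ∈ P
  · exact Or.inr (Or.inl hA2)
  push_neg at hA2
  obtain ⟨q, hqD, hqP⟩ := hA2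
  by_cases hdisj : Disjoint (derivedSet (orbit G x) ∩ Pᶜ) (orbit G x)
  · -- Option 4 with the derived set off P
    refine Or.inr (Or.inr (Or.inr ⟨derivedSet (orbit G x) ∩ Pᶜ,
      fun z hz => derivedSet_subset_closure _ hz.1, ⟨q, hqD, hqP⟩, ?_, ?_,
      inter_subset_right, ?_, hdisj⟩))
    · intro heq
      have hxK : x ∈ derivedSet (orbit G x) ∩ Pᶜ := heq.symm ▸ subset_closure hOx
      exact Set.disjoint_left.mp hdisj hxK hOx
    · intro g hg
      rw [Set.image_inter g.injective, hDinv g hg, hPcinv g hg]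
    · intro z hz
      refine ⟨?_, hz.2⟩
      have : z ∈ closure (derivedSet (orbit G x)) :=
        closure_mono inter_subset_left hz.1
      rwa [(isClosed_derivedSet _).closure_eq] at this
  · -- the orbit consists of accumulation points
    rw [Set.not_disjoint_iff] at hdisj
    obtain ⟨w, ⟨hwD, _⟩, hwO⟩ := hdisj
    have hxD : x ∈ derivedSet (orbit G x) := by
      obtain ⟨g, hg, rfl⟩ := hwO
      have himg := hDinv g⁻¹ (G.inv_mem hg)
      exact himg ▸ ⟨g x, hwD, g.symm_apply_apply x⟩
    have hOD : orbit G x ⊆ derivedSet (orbit G x) := by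
      rintro _ ⟨g, hg, rfl⟩
      exact (hDinv g hg) ▸ ⟨x, hxD, rfl⟩
    have hCD : closure (orbit G x) ⊆ derivedSet (orbit G x) :=
      closure_minimal hOD (isClosed_derivedSet _)
    have hCperf : Perfect (closure (orbit G x)) :=
      ⟨isClosed_closure, fun z hz => AccPt.mono (hCD hz) (principal_mono.mpr subset_closure)⟩
    by_cases hU : (interior (closure (orbit G x))).Nonempty
    · -- interior nonempty: option 1 or option 4
      have hUinv : ∀ g : S1 ≃ₜ S1, g ∈ G →
          ⇑g '' interior (closure (orbit G x)) = interior (closure (orbit G x)) := by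
        intro g hg
        rw [g.image_interior, hCinv g hg]
      have hOU : orbit G x ⊆ interior (closure (orbit G x)) := by
        intro z hz
        by_contra hzU
        have hxU : x ∉ interior (closure (orbit G x)) := by
          intro hxU
          obtain ⟨g, hg, rfl⟩ := hz
          exact hzU ((hUinv g hg) ▸ ⟨x, hxU, rfl⟩)
        have hOB : orbit G x ⊆ closure (orbit G x) \ interior (closure (orbit G x)) := by
          rintro _ ⟨g, hg, rfl⟩
          refine ⟨subset_closure ⟨g, hg, rfl⟩, fun hmem => ?_⟩
          have h2 : x ∈ ⇑(g⁻¹) '' interior (closure (orbit G x)) :=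
            ⟨g x, hmem, g.symm_apply_apply x⟩
          rw [hUinv g⁻¹ (G.inv_mem hg)] at h2
          exact hxU h2
        have hCB : closure (orbit G x) ⊆ closure (orbit G x) \ interior (closure (orbit G x)) :=
          closure_minimal hOB (isClosed_closure.sdiff isOpen_interior)
        obtain ⟨u0, hu0⟩ := hU
        exact (hCB (interior_subset hu0)).2 hu0
      by_cases hB : ((closure (orbit G x) \ interior (closure (orbit G x))) ∩ Pᶜ).Nonempty
      · -- option 4 with the boundary
        refine Or.inr (Or.inr (Or.inr
          ⟨(closure (orbit G x) \ interior (closure (orbit G x))) ∩ Pᶜ,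
          fun z hz => hz.1.1, hB, ?_, ?_, inter_subset_right, ?_, ?_⟩))
        · intro heq
          have hxK := heq.symm ▸ subset_closure hOx
          exact hxK.1.2 (hOU hOx)
        · intro g hg
          rw [Set.image_inter g.injective, Set.image_diff g.injective, hCinv g hg,
            hUinv g hg, hPcinv g hg]
        · intro z hz
          refine ⟨?_, hz.2⟩
          have h1 : z ∈ closure (closure (orbit G x) \ interior (closure (orbit G x))) :=
            closure_mono inter_subset_left hz.1
          rwa [(isClosed_closure.sdiff isOpen_interior).closure_eq] at h1
        · exact Set.disjoint_left.mpr fun z hzK hzO => hzK.1.2 (hOU hzO)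
      · -- option 1
        rw [Set.not_nonempty_iff_eq_empty] at hB
        have hCPU : closure (orbit G x) ∩ Pᶜ ⊆ interior (closure (orbit G x)) := by
          intro z hz
          by_contra h
          exact absurd hB (Set.nonempty_iff_ne_empty.mp ⟨z, ⟨hz.1, h⟩, hz.2⟩)
        have hVopen : IsOpen (closure (orbit G x) ∩ Pᶜ) := by
          have heq : closure (orbit G x) ∩ Pᶜ = interior (closure (orbit G x)) ∩ Pᶜ :=
            subset_antisymm (fun z hz => ⟨hCPU hz, hz.2⟩)
              (fun z hz => ⟨interior_subset hz.1, hz.2⟩)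
          rw [heq]; exact isOpen_interior.inter hPco
        refine Or.inl ?_
        intro z hz
        obtain ⟨y, hyO, hzcc⟩ := mem_iUnion₂.mp hz
        have hcc : connectedComponentIn (Pᶜ : Set S1) y ⊆ closure (orbit G x) ∩ Pᶜ := by
          refine isPreconnected_connectedComponentIn.subset_left_of_subset_union
            (v := Pᶜ ∩ (closure (orbit G x))ᶜ) hVopen
            (hPco.inter isClosed_closure.isOpen_compl) ?_ ?_
            ⟨y, mem_connectedComponentIn (hOP y hyO), subset_closure hyO, hOP y hyO⟩
          · exact Set.disjoint_left.mpr fun a ha hb => hb.2 ha.1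
          · intro a ha
            by_cases h : a ∈ closure (orbit G x)
            · exact Or.inl ⟨h, connectedComponentIn_subset _ _ ha⟩
            · exact Or.inr ⟨connectedComponentIn_subset _ _ ha, h⟩
        exact (hcc hzcc).1
    · -- empty interior
      rw [Set.not_nonempty_iff_eq_empty] at hU
      by_cases hmin : ∀ z ∈ closure (orbit G x), z ∉ P → x ∈ closure (orbit G z)
      · -- option 3
        refine Or.inr (Or.inr (Or.inl ⟨closure (orbit G x), closure_mono hOrg,
          ⟨x, subset_closure hOx⟩, isClosed_closure.isCompact, hCperf, ?_, hCinv,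
          subset_closure, subset_rfl, ?_⟩))
        · show interior (closure (closure (orbit G x))) = ∅
          rwa [closure_closure]
        · -- the key density statement
          intro y hy
          suffices hxy : x ∈ closure (orbit G y) by
            have hOsub : orbit G x ⊆ closure (orbit G y) := by
              rintro _ ⟨g, hg, rfl⟩
              exact (closure_orbit_inv y g hg) ▸ ⟨x, hxy, rfl⟩
            exact closure_minimal hOsub isClosed_closure
          by_contra hxy
          obtain ⟨w, hwO, hycc⟩ := mem_iUnion₂.mp hy
          have hyP : y ∈ (Pᶜ : Set S1) := connectedComponentIn_subset _ _ hycc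
          by_cases hyC : y ∈ closure (orbit G x)
          · exact hxy (hmin y hyC hyP)
          set Gp := connectedComponentIn ((closure (orbit G x))ᶜ) y with hGpdef
          have hyGp : y ∈ Gp := mem_connectedComponentIn hyC
          have hGpo : IsOpen Gp := isClosed_closure.isOpen_compl.connectedComponentIn
          have hGppc : IsPreconnected Gp := isPreconnected_connectedComponentIn
          have hGpsub : Gp ⊆ (closure (orbit G x))ᶜ := connectedComponentIn_subset _ _
          have hfr : ∃ α, α ∈ frontier Gp ∧ α ∉ P := by
            by_contra hcon
            push_neg at hcon
            have hcov : (Pᶜ : Set S1) ⊆ Gp ∪ (closure Gp)ᶜ := by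
              intro a ha
              by_cases hac : a ∈ closure Gp
              · by_cases h : a ∈ Gp
                · exact Or.inl h
                · exact absurd (hcon a (by rw [hGpo.frontier_eq]; exact ⟨hac, h⟩)) ha
              · exact Or.inr hac
            have hJ : connectedComponentIn (Pᶜ : Set S1) w ⊆ Gp := by
              refine isPreconnected_connectedComponentIn.subset_left_of_subset_union hGpo
                isClosed_closure.isOpen_compl
                (disjoint_compl_right.mono_left subset_closure)
                ((connectedComponentIn_subset _ _).trans hcov) ⟨y, hycc, hyGp⟩
            exact (hGpsub (hJ (mem_connectedComponentIn (hOP w hwO)))) (subset_closure hwO)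
          obtain ⟨α, hαf, hαP⟩ := hfr
          have hαfr : α ∈ closure Gp \ Gp := by rwa [hGpo.frontier_eq] at hαf
          have hαC : α ∈ closure (orbit G x) := by
            by_contra hαC
            have hpc : IsPreconnected (insert α Gp) :=
              hGppc.subset_closure (subset_insert _ _) (insert_subset hαfr.1 subset_closure)
            have hsub2 : insert α Gp ⊆ Gp :=
              hpc.subset_connectedComponentIn (mem_insert_of_mem _ hyGp)
                (insert_subset hαC hGpsub)
            exact hαfr.2 (hsub2 (mem_insert _ _))
          have hxα : x ∈ closure (orbit G α) := hmin α hαC hαP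
          have haccα : AccPt x (𝓟 (orbit G α)) := by
            by_cases hxo : x ∈ orbit G α
            · have heqo : orbit G α = orbit G x := by
                obtain ⟨g, hg, hgx⟩ := hxo
                have h2 := orbit_apply (G := G) hg α
                rw [hgx] at h2
                exact h2.symm
              rw [heqo]
              exact hxD
            · exact accPt_of_mem_closure hxα hxo
          obtain ⟨r₀, hr₀, hball⟩ :=
            Metric.mem_nhds_iff.mp (isClosed_closure.isOpen_compl.mem_nhds hxy)
          set r := min (r₀ / 2) (1 / 3) with hrdef
          have hrpos : 0 < r := lt_min (by linarith) (by norm_num)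
          have hcb : ∀ z ∈ orbit G y, z ∉ closedBall x r := by
            intro z hz hzb
            have hzr : z ∈ ball x r₀ := by
              have h1 : dist z x ≤ r := mem_closedBall.mp hzb
              have h2 : r < r₀ := lt_of_le_of_lt (min_le_left _ _) (by linarith)
              exact mem_ball.mpr (lt_of_le_of_lt h1 h2)
            exact (hball hzr) (subset_closure hz)
          have hQinf : (orbit G α ∩ ball x r).Infinite :=
            accPt_inter_infinite haccα (ball_mem_nhds x hrpos)
          have hchoice : ∀ z, z ∈ orbit G α ∩ ball x r → ∃ s : S1,
              s ∈ sphere x r ∧ s ∈ ((closure (orbit G x))ᶜ : Set S1) ∧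
              z ∈ frontier (connectedComponentIn ((closure (orbit G x))ᶜ) s) := by
            rintro z ⟨⟨g, hg, rfl⟩, hzball⟩
            have hEcc : ⇑g '' Gp = connectedComponentIn ((closure (orbit G x))ᶜ) (g y) := by
              have h2 := Homeomorph.image_connectedComponentIn g
                (s := (closure (orbit G x))ᶜ) (x := y) hyC
              rwa [hCcinv g hg] at h2
            have hEfr : frontier (⇑g '' Gp) = ⇑g '' frontier Gp :=
              (homeo_image_frontier g Gp).symm
            have hzfr : g α ∈ frontier (⇑g '' Gp) := by
              rw [hEfr]; exact ⟨α, hαf, rfl⟩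
            have hEco : ⇑g '' Gp ⊆ ((closure (orbit G x))ᶜ : Set S1) := by
              rw [hEcc]; exact connectedComponentIn_subset _ _
            have hgyE : g y ∈ ⇑g '' Gp := ⟨y, hyGp, rfl⟩
            have hEb : (⇑g '' Gp ∩ ball x r).Nonempty := by
              have hcl : g α ∈ closure (⇑g '' Gp) := frontier_subset_closure hzfr
              rw [_root_.mem_closure_iff] at hcl
              obtain ⟨t, ht1, ht2⟩ := hcl _ isOpen_ball hzball
              exact ⟨t, ht2, ht1⟩
            have hEout : ∃ t ∈ ⇑g '' Gp, t ∉ closedBall x r :=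
              ⟨g y, hgyE, hcb (g y) ⟨g, hg, rfl⟩⟩
            have hEpc : IsPreconnected (⇑g '' Gp) :=
              hGppc.image _ g.continuous.continuousOn
            obtain ⟨s, hsE, hssph⟩ := cross_sphere hEpc hEb hEout
            refine ⟨s, hssph, hEco hsE, ?_⟩
            have hccs : connectedComponentIn ((closure (orbit G x))ᶜ) s = ⇑g '' Gp := by
              rw [hEcc]
              exact (connectedComponentIn_eq (by rw [hEcc] at hsE; exact hsE)).symm
            rw [hccs]
            exact hzfr
          choose! φ hφ1 hφ2 hφ3 using hchoice
          have hTsub : orbit G α ∩ ball x r ⊆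
              {z ∈ orbit G α ∩ ball x r | φ z = x + ((r : ℝ) : S1)} ∪
              {z ∈ orbit G α ∩ ball x r | φ z = x + ((-r : ℝ) : S1)} := by
            intro z hz
            rcases s1_sphere_subset_pair x hrpos (hφ1 z hz) with h | h
            · exact Or.inl ⟨hz, h⟩
            · exact Or.inr ⟨hz, h⟩
          have hinfc : ∃ c : S1, {z ∈ orbit G α ∩ ball x r | φ z = c}.Infinite := by
            by_contra hcon
            push_neg at hcon
            have h1 := hcon (x + ((r : ℝ) : S1))
            have h2 := hcon (x + ((-r : ℝ) : S1))
            exact hQinf ((h1.union h2).subset hTsub)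
          obtain ⟨c, hcinf⟩ := hinfc
          obtain ⟨z₀, hz₀⟩ := hcinf.nonempty
          have hcO : c ∈ ((closure (orbit G x))ᶜ : Set S1) := hz₀.2 ▸ hφ2 z₀ hz₀.1
          obtain ⟨a', b', hfr'⟩ := frontier_subset_pair
            (isPreconnected_connectedComponentIn
              (F := ((closure (orbit G x))ᶜ : Set S1)) (x := c))
            (isClosed_closure.isOpen_compl.connectedComponentIn)
            ⟨c, mem_connectedComponentIn hcO⟩
            (by
              intro heq
              have hxm : x ∈ connectedComponentIn ((closure (orbit G x))ᶜ) c :=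
                heq.symm ▸ mem_univ x
              exact (connectedComponentIn_subset _ _ hxm) (subset_closure hOx))
          have hsubfr : {z ∈ orbit G α ∩ ball x r | φ z = c} ⊆ {a', b'} := by
            intro z hz
            have h3 := hφ3 z hz.1
            rw [hz.2] at h3
            exact hfr' h3
          exact hcinf (((Set.finite_singleton b').insert a').subset hsubfr)
      · -- option 4 from failure of quasi-minimality
        push_neg at hmin
        obtain ⟨z, hzC, hzP, hzx⟩ := hmin
        refine Or.inr (Or.inr (Or.inr
          ⟨closure (orbit G x) ∩ closure (orbit G z) ∩ Pᶜ,
          fun a ha => ha.1.1,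
          ⟨z, ⟨hzC, subset_closure (mem_orbit_self z)⟩, hzP⟩, ?_, ?_,
          inter_subset_right, ?_, ?_⟩))
        · intro heq
          have hxK := heq.symm ▸ subset_closure hOx
          exact hzx hxK.1.2
        · intro g hg
          rw [Set.image_inter g.injective, Set.image_inter g.injective,
            hCinv g hg, closure_orbit_inv z g hg, hPcinv g hg]
        · intro a ha
          refine ⟨?_, ha.2⟩
          have h1 : a ∈ closure (closure (orbit G x) ∩ closure (orbit G z)) :=
            closure_mono inter_subset_left ha.1
          rwa [(isClosed_closure.inter isClosed_closure).closure_eq] at h1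
        · rw [Set.disjoint_left]
          rintro a haK ⟨g, hg, rfl⟩
          refine hzx ?_
          have h2 : x ∈ ⇑(g⁻¹) '' closure (orbit G z) :=
            ⟨g x, haK.1.2, g.symm_apply_apply x⟩
          rwa [closure_orbit_inv z g⁻¹ (G.inv_mem hg)] at h2
end

section
/- Let G be a subgroup of the group of orientation-preserving homeomorphisms of the circle S¹, let P ⊆ S¹ be a nonempty finite G-invariant set, and let K ⊆ S¹ ∖ P be a nonempty G-invariant set that is closed in the subspace topology of S¹ ∖ P, whose closure in S¹ is perfect and nowhere dense, and such that the G-orbit of every point of K is dense in K. Let I be a connected component of S¹ ∖ (closure(K) ∪ P) and suppose some endpoint a of I lies in K. Then for every y ∈ I, K is contained in the closure of O(y). -/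
open Set Topology Filter

lemma coe_sub_int {x y : ℝ} (h : ((x : ℝ) : S1) = ((y : ℝ) : S1)) : ∃ n : ℤ, x - y = n := by
  have h2 : x - y ∈ AddSubgroup.zmultiples (1:ℝ) := QuotientAddGroup.eq_iff_sub_mem.mp h
  obtain ⟨n, hn⟩ := AddSubgroup.mem_zmultiples_iff.mp h2
  exact ⟨n, by simpa [zsmul_eq_mul] using hn.symm⟩

lemma existsArc (V : Set S1) (hV : IsOpen V) (hVconn : IsPreconnected V)
    {y : S1} (hy : y ∈ V) {a : S1} (haV : a ∈ closure V) (haV' : a ∉ V) :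
    ∃ C : Set S1, IsPreconnected C ∧ y ∈ C ∧ C ⊆ V ∧ closure C ⊆ C ∪ {a} ∧ a ∈ closure C := by
  obtain ⟨α, hα⟩ : ∃ α : ℝ, ((α : ℝ) : S1) = a := QuotientAddGroup.mk_surjective a
  set φ := AddCircle.openPartialHomeomorphCoe (1:ℝ) α with hφ
  have htgt : φ.target = {a}ᶜ := by simp [hφ, hα]
  have hφs : φ.source = Ioo α (α+1) := by simp [hφ]
  have hVt : V ⊆ φ.target := by
    rw [htgt]; intro x hx hxa
    exact haV' ((show x = a from hxa) ▸ hx)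
  set ψ : S1 → ℝ := ⇑φ.symm with hψ
  set I' : Set ℝ := ψ '' V with hI'
  have hI'Ioo : I' ⊆ Ioo α (α+1) := by
    rintro - ⟨x, hx, rfl⟩; exact hφs ▸ φ.map_target (hVt hx)
  have hπψ : ∀ x ∈ V, ((ψ x : ℝ) : S1) = x := fun x hx => φ.right_inv (hVt hx)
  have hπ : ∀ s ∈ I', ((s:ℝ) : S1) ∈ V := by rintro - ⟨x, hx, rfl⟩; rw [hπψ x hx]; exact hx
  have hI'pre : ∀ s ∈ Ioo α (α+1), ((s:ℝ):S1) ∈ V → s ∈ I' := by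
    intro s hs hsV; exact ⟨_, hsV, φ.left_inv (hφs ▸ hs)⟩
  have hI'open : IsOpen I' := by
    have : I' = Ioo α (α+1) ∩ (fun s : ℝ => ((s:ℝ):S1)) ⁻¹' V := by
      ext s; constructor
      · intro hs; exact ⟨hI'Ioo hs, hπ s hs⟩
      · rintro ⟨h1, h2⟩; exact hI'pre s h1 h2
    rw [this]
    exact isOpen_Ioo.inter (hV.preimage (AddCircle.continuous_mk' 1))
  have hI'conn : IsPreconnected I' := hVconn.image _ (φ.symm.continuousOn.mono (by rw [OpenPartialHomeomorph.symm_source]; exact hVt))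
  have hI'ord : OrdConnected I' := hI'conn.ordConnected
  set y' := ψ y with hy'def
  have hy' : y' ∈ I' := ⟨y, hy, rfl⟩
  have hne : I'.Nonempty := ⟨y', hy'⟩
  have hbb : BddBelow I' := ⟨α, fun s hs => (hI'Ioo hs).1.le⟩
  have hba : BddAbove I' := ⟨α+1, fun s hs => (hI'Ioo hs).2.le⟩
  set c := sInf I' with hc
  set d := sSup I' with hd
  have hαc : α ≤ c := le_csInf hne fun s hs => (hI'Ioo hs).1.le
  have hdα : d ≤ α + 1 := csSup_le hne fun s hs => (hI'Ioo hs).2.le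
  have hIoosub : Ioo c d ⊆ I' := by
    intro x hx
    obtain ⟨u, hu, hux⟩ := exists_lt_of_csInf_lt hne hx.1
    obtain ⟨v, hv, hxv⟩ := exists_lt_of_lt_csSup hne hx.2
    exact hI'ord.out hu hv ⟨hux.le, hxv.le⟩
  have hsubIoo : I' ⊆ Ioo c d := by
    intro x hx
    obtain ⟨ε, hε, hball⟩ := Metric.isOpen_iff.mp hI'open x hx
    constructor
    · have hmem : x - ε/2 ∈ I' := hball (by
        simp only [Metric.mem_ball, Real.dist_eq]
        rw [abs_of_nonpos (by linarith)]; linarith)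
      calc c ≤ x - ε/2 := csInf_le hbb hmem
        _ < x := by linarith
    · have hmem : x + ε/2 ∈ I' := hball (by
        simp only [Metric.mem_ball, Real.dist_eq]
        rw [abs_of_nonneg (by linarith)]; linarith)
      calc x < x + ε/2 := by linarith
        _ ≤ d := le_csSup hba hmem
  have hVeq : V = (fun s : ℝ => ((s:ℝ):S1)) '' I' := by
    ext x; constructor
    · intro hx; exact ⟨ψ x, ⟨x, hx, rfl⟩, hπψ x hx⟩
    · rintro ⟨s, hs, rfl⟩; exact hπ s hs
  have hdich : c = α ∨ d = α + 1 := by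
    by_contra hcon
    push_neg at hcon
    have hc' : α < c := lt_of_le_of_ne hαc (Ne.symm hcon.1)
    have hd' : d < α + 1 := lt_of_le_of_ne hdα hcon.2
    have hclosed : IsClosed ((fun s : ℝ => ((s:ℝ):S1)) '' Icc c d) :=
      (isCompact_Icc.image (AddCircle.continuous_mk' 1)).isClosed
    have hsub2 : V ⊆ (fun s : ℝ => ((s:ℝ):S1)) '' Icc c d := by
      rw [hVeq]; exact image_mono (fun s hs => ⟨csInf_le hbb hs, le_csSup hba hs⟩)
    obtain ⟨s, hs, hsa⟩ := closure_minimal hsub2 hclosed haV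
    obtain ⟨n, hn⟩ := coe_sub_int (x := s) (y := α) (by simpa [hα] using hsa)
    have h1 : (0:ℝ) < n := by rw [← hn]; have := hs.1; linarith
    have h2 : (n:ℝ) < 1 := by rw [← hn]; have := hs.2; linarith
    have h1' : 0 < n := by exact_mod_cast h1
    have h2' : n < 1 := by exact_mod_cast h2
    omega
  have hαy' : α < y' := (hI'Ioo hy').1
  have hy'α : y' < α + 1 := (hI'Ioo hy').2
  have hcy' : c < y' := (hsubIoo hy').1
  have hy'd : y' < d := (hsubIoo hy').2
  rcases hdich with hcα | hdα1
  · refine ⟨(fun s : ℝ => ((s:ℝ):S1)) '' Ioc α y', isPreconnected_Ioc.image _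
      (AddCircle.continuous_mk' 1).continuousOn, ⟨y', ⟨hαy', le_refl _⟩, hπψ y hy⟩, ?_, ?_, ?_⟩
    · rintro - ⟨s, hs, rfl⟩
      exact hπ s (hIoosub ⟨hcα ▸ hs.1, lt_of_le_of_lt hs.2 hy'd⟩)
    · have h1 : closure ((fun s : ℝ => ((s:ℝ):S1)) '' Ioc α y')
          ⊆ (fun s : ℝ => ((s:ℝ):S1)) '' Icc α y' :=
        closure_minimal (image_mono Ioc_subset_Icc_self)
          (isCompact_Icc.image (AddCircle.continuous_mk' 1)).isClosed
      refine h1.trans ?_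
      rw [← Ioc_insert_left hαy'.le, image_insert_eq, hα]
      intro x hx
      rcases hx with rfl | hx
      · exact Or.inr rfl
      · exact Or.inl hx
    · refine (image_closure_subset_closure_image (AddCircle.continuous_mk' 1)) ?_
      exact ⟨α, by rw [closure_Ioc hαy'.ne]; exact ⟨le_refl _, hαy'.le⟩, hα⟩
  · refine ⟨(fun s : ℝ => ((s:ℝ):S1)) '' Ico y' (α+1), isPreconnected_Ico.image _
      (AddCircle.continuous_mk' 1).continuousOn, ⟨y', ⟨le_refl _, hy'α⟩, hπψ y hy⟩, ?_, ?_, ?_⟩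
    · rintro - ⟨s, hs, rfl⟩
      exact hπ s (hIoosub ⟨lt_of_lt_of_le hcy' hs.1, hdα1 ▸ hs.2⟩)
    · have h1 : closure ((fun s : ℝ => ((s:ℝ):S1)) '' Ico y' (α+1))
          ⊆ (fun s : ℝ => ((s:ℝ):S1)) '' Icc y' (α+1) :=
        closure_minimal (image_mono Ico_subset_Icc_self)
          (isCompact_Icc.image (AddCircle.continuous_mk' 1)).isClosed
      refine h1.trans ?_
      rw [← Ico_insert_right hy'α.le, image_insert_eq]
      have : ((α + 1 : ℝ) : S1) = a := by rw [AddCircle.coe_add_period, hα]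
      rw [this]
      intro x hx
      rcases hx with rfl | hx
      · exact Or.inr rfl
      · exact Or.inl hx
    · refine (image_closure_subset_closure_image (AddCircle.continuous_mk' 1)) ?_
      refine ⟨α+1, by rw [closure_Ico hy'α.ne]; exact ⟨hy'α.le, le_refl _⟩, ?_⟩
      show ((α + 1 : ℝ) : S1) = a
      rw [AddCircle.coe_add_period, hα]

/-- If `K ⊆ S¹ ∖ P` is a nonempty `G`-invariant set, closed in `S¹ ∖ P`,
whose closure is perfect and nowhere dense, all of whose points have orbits dense in `K`,
and `I` is a connected component of `S¹ ∖ (closure K ∪ P)` having an endpoint `a ∈ K`,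
then `K` is contained in the orbit closure of every `y ∈ I`. -/
theorem stmt5 (G : Subgroup (S1 ≃ₜ S1)) (hor : ∀ g ∈ G, OrientPres g)
    (P : Set S1) (hPne : P.Nonempty) (hPfin : P.Finite)
    (hPinv : ∀ g ∈ G, ⇑(g : S1 ≃ₜ S1) '' P = P)
    (K : Set S1) (hKP : K ⊆ Pᶜ) (hKne : K.Nonempty)
    (hKinv : ∀ g ∈ G, ⇑(g : S1 ≃ₜ S1) '' K = K)
    (hKcl : closure K ∩ Pᶜ ⊆ K)
    (hKperf : Perfect (closure K)) (hKnwd : IsNowhereDense (closure K))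
    (hKdense : ∀ x ∈ K, K ⊆ closure (orbit G x))
    (I : Set S1) (hI : ∃ w ∈ (closure K ∪ P)ᶜ, I = connectedComponentIn (closure K ∪ P)ᶜ w)
    (a : S1) (ha : a ∈ closure I \ I) (haK : a ∈ K) :
    ∀ y ∈ I, K ⊆ closure (orbit G y) := by
  haveI : LocallyPathConnectedSpace S1 := Quotient.locPathConnectedSpace
  obtain ⟨w, hw, hIw⟩ := hI
  have hUopen : IsOpen (closure K ∪ P)ᶜ := (isClosed_closure.union hPfin.isClosed).isOpen_compl
  have hIopen : IsOpen I := hIw ▸ hUopen.connectedComponentIn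
  have hIU : I ⊆ (closure K ∪ P)ᶜ := hIw ▸ connectedComponentIn_subset _ _
  have hIconn : IsPreconnected I := hIw ▸ (isPreconnected_connectedComponentIn)
  intro y hy k hkK
  obtain ⟨C, hCconn, hyC, hCI, hCcl, haC⟩ := existsArc I hIopen hIconn hy ha.1 ha.2
  have hCclK : ∀ x ∈ C, x ∉ closure K := fun x hx hxK => (hIU (hCI hx)) (Or.inl hxK)
  rw [mem_closure_iff]
  intro W hWopen hkW
  -- lift around k
  obtain ⟨κ, hκ⟩ : ∃ κ : ℝ, ((κ : ℝ) : S1) = k := QuotientAddGroup.mk_surjective k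
  set φ := AddCircle.openPartialHomeomorphCoe (1:ℝ) κ with hφdef
  have htgt : φ.target = {k}ᶜ := by simp [hφdef, hκ]
  have hφs : φ.source = Ioo κ (κ+1) := by simp [hφdef]
  set ψ : S1 → ℝ := ⇑φ.symm with hψ
  have hψcont : ContinuousOn ψ {k}ᶜ := by
    rw [hψ, ← htgt, ← OpenPartialHomeomorph.symm_source]
    exact φ.symm.continuousOn
  have hmt : ∀ x : S1, x ≠ k → ψ x ∈ Ioo κ (κ+1) := by
    intro x hx
    exact hφs ▸ φ.map_target (htgt ▸ hx)
  have hri : ∀ x : S1, x ≠ k → ((ψ x : ℝ) : S1) = x := by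
    intro x hx
    exact φ.right_inv (htgt ▸ hx)
  -- choose η
  have hkP : k ∈ Pᶜ := hKP hkK
  have hnhds : (fun s : ℝ => ((s:ℝ):S1)) ⁻¹' (W ∩ Pᶜ) ∈ 𝓝 κ := by
    have : W ∩ Pᶜ ∈ 𝓝 k := (hWopen.inter hPfin.isClosed.isOpen_compl).mem_nhds ⟨hkW, hkP⟩
    have hcont : ContinuousAt (fun s : ℝ => ((s:ℝ):S1)) κ := (AddCircle.continuous_mk' 1).continuousAt
    rw [← hκ] at this
    exact hcont.preimage_mem_nhds this
  obtain ⟨η₀, hη₀, hη₀sub⟩ := Metric.mem_nhds_iff.mp hnhds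
  set η := min η₀ (1/4) with hηdef
  have hη : 0 < η := lt_min hη₀ (by norm_num)
  have hη4 : η ≤ 1/4 := min_le_right _ _
  have hηsub : ∀ s ∈ Ioo (κ-η) (κ+η), ((s:ℝ):S1) ∈ W ∩ Pᶜ := by
    intro s hs
    have h1 := min_le_left η₀ (1/4)
    have hball : s ∈ Metric.ball κ η₀ := by
      rw [Real.ball_eq_Ioo]
      exact ⟨by linarith [hs.1], by linarith [hs.2]⟩
    exact hη₀sub hball
  set N : Set S1 := (fun s : ℝ => ((s:ℝ):S1)) '' Ioo (κ-η) (κ+η) with hNdef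
  have hNopen : IsOpen N := QuotientAddGroup.isOpenMap_coe _ isOpen_Ioo
  have hkN : k ∈ N := ⟨κ, ⟨by linarith, by linarith⟩, hκ⟩
  have hNW : N ⊆ W ∩ Pᶜ := by rintro - ⟨s, hs, rfl⟩; exact hηsub s hs
  -- side classification
  have hside : ∀ p ∈ N, p ≠ k → ψ p ∈ Ioo κ (κ+η) ∨ ψ p ∈ Ioo (κ+1-η) (κ+1) := by
    rintro p ⟨s, hs, rfl⟩ hpk
    have ht := hmt _ hpk
    obtain ⟨n, hn⟩ := coe_sub_int (x := ψ ((s:ℝ):S1)) (y := s) (hri _ hpk)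
    have hb1 : (-1 : ℝ) < n := by rw [← hn]; have := ht.1; have := hs.2; linarith
    have hb2 : (n : ℝ) < 2 := by rw [← hn]; have := ht.2; have := hs.1; linarith
    have hb1' : (-1 : ℤ) < n := by exact_mod_cast hb1
    have hb2' : n < 2 := by exact_mod_cast hb2
    have : n = 0 ∨ n = 1 := by omega
    rcases this with rfl | rfl
    · left
      have heq : ψ ((s:ℝ):S1) = s := by rw [← sub_eq_zero]; rw [hn]; norm_num
      rw [heq] at ht
      rw [heq]
      exact ⟨ht.1, hs.2⟩
    · right
      have heq : ψ ((s:ℝ):S1) = s + 1 := by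
        have : ψ ((s:ℝ):S1) - s = 1 := by rw [hn]; norm_num
        linarith
      rw [heq] at ht
      rw [heq]
      exact ⟨by have := hs.1; linarith, ht.2⟩
  -- orbit points of a lie in K
  have horbK : ∀ p ∈ orbit G a, p ∈ K := by
    rintro - ⟨g, hg, rfl⟩
    have : g a ∈ ⇑(g : S1 ≃ₜ S1) '' K := mem_image_of_mem _ haK
    rwa [hKinv g hg] at this
  -- extraction of orbit points near k
  have horb : ∀ V : Set S1, IsOpen V → k ∈ V → V ⊆ N → ∃ p ∈ orbit G a, p ∈ V ∧ p ≠ k := by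
    intro V hVo hkV hVN
    have hacc := hKperf.acc k (subset_closure hkK)
    rw [accPt_iff_nhds] at hacc
    obtain ⟨k', ⟨hk'V, hk'K⟩, hk'ne⟩ := hacc V (hVo.mem_nhds hkV)
    have hk'KK : k' ∈ K := hKcl ⟨hk'K, (hNW (hVN hk'V)).2⟩
    have hk'cl : k' ∈ closure (orbit G a) := hKdense a haK hk'KK
    rw [mem_closure_iff] at hk'cl
    obtain ⟨p, hpm, hporb⟩ := hk'cl (V ∩ {k}ᶜ) (hVo.inter isOpen_compl_singleton) ⟨hk'V, hk'ne⟩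
    exact ⟨p, hporb, hpm.1, hpm.2⟩
  -- main contradiction lemma
  have hmain : ∀ g : S1 ≃ₜ S1, g ∈ G → g a ≠ k → ∀ p' ∈ K, p' ≠ k → p' ≠ g a →
      (ψ p' ∈ Icc (ψ (g a)) (ψ (g y)) ∪ Icc (ψ (g y)) (ψ (g a))) → False := by
    intro g hg hgak p' hp'K hp'k hp'ga hmem
    set D := closure (⇑g '' C) with hDdef
    have hgC : ⇑g '' C ∩ K = ∅ := by
      ext x
      simp only [mem_inter_iff, mem_empty_iff_false, iff_false, not_and]
      rintro ⟨c, hc, rfl⟩ hxK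
      have : g c ∈ ⇑(g : S1 ≃ₜ S1) '' K := (hKinv g hg).symm ▸ hxK
      obtain ⟨m, hm, hmc⟩ := this
      exact hCclK c hc (subset_closure ((g.injective hmc) ▸ hm))
    have hDeq : D = ⇑g '' closure C := (Homeomorph.image_closure g C).symm
    have hDsub : D ⊆ ⇑g '' C ∪ {g a} := by
      rw [hDeq]
      rintro - ⟨c, hc, rfl⟩
      rcases hCcl hc with h | h
      · exact Or.inl (mem_image_of_mem _ h)
      · exact Or.inr (by rw [h]; rfl)
    have hDk : D ⊆ {k}ᶜ := by
      intro x hx hxk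
      have hxk' : x = k := hxk
      rcases hDsub hx with h | h
      · have hmem : x ∈ ⇑g '' C ∩ K := ⟨h, hxk' ▸ hkK⟩
        rw [hgC] at hmem
        exact hmem
      · have hxg : x = g a := h
        exact hgak (by rw [← hxg]; exact hxk')
    have hDconn : IsPreconnected D := (hCconn.image _ g.continuous.continuousOn).closure
    have hψD : IsPreconnected (ψ '' D) := hDconn.image _ (hψcont.mono hDk)
    have hord := hψD.ordConnected
    have hgaD : g a ∈ D := by
      rw [hDeq]; exact mem_image_of_mem _ haC
    have hgyD : g y ∈ D := subset_closure (mem_image_of_mem _ hyC)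
    have hmem2 : ψ p' ∈ ψ '' D := by
      rcases hmem with h | h
      · exact hord.out (mem_image_of_mem _ hgaD) (mem_image_of_mem _ hgyD) h
      · exact hord.out (mem_image_of_mem _ hgyD) (mem_image_of_mem _ hgaD) h
    obtain ⟨x, hxD, hx⟩ := hmem2
    have hxk : x ≠ k := hDk hxD
    have hxp : x = p' := by
      have h1 := hri x hxk
      have h2 := hri p' hp'k
      rw [← h1, ← h2, hx]
    rcases hDsub (hxp ▸ hxD) with h | h
    · have hmem3 : p' ∈ ⇑g '' C ∩ K := ⟨h, hp'K⟩
      rw [hgC] at hmem3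
      exact hmem3
    · exact hp'ga h
  -- step lemma
  have step : ∀ g : S1 ≃ₜ S1, g ∈ G → g a ≠ k → ∀ p' ∈ K, p' ≠ k → p' ≠ g a →
      ((ψ (g a) < ψ p' ∧ ψ p' < κ + η) ∨ (κ + 1 - η < ψ p' ∧ ψ p' < ψ (g a))) →
      g y ∈ N := by
    intro g hg hgk p' hp'K hp'k hp'g hcase
    by_contra hgyN
    have hgyk : g y ≠ k := fun h => hgyN (h ▸ hkN)
    have hq := hmt _ hgyk
    have hq1 : κ + η ≤ ψ (g y) := by
      by_contra hlt
      push_neg at hlt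
      exact hgyN ⟨ψ (g y), ⟨by have := hq.1; linarith, hlt⟩, hri _ hgyk⟩
    have hq2 : ψ (g y) ≤ κ + 1 - η := by
      by_contra hlt
      push_neg at hlt
      refine hgyN ⟨ψ (g y) - 1, ⟨by linarith, by have := hq.2; linarith⟩, ?_⟩
      show ((ψ (g y) - 1 : ℝ) : S1) = g y
      have : ((ψ (g y) - 1 + 1 : ℝ) : S1) = ((ψ (g y) - 1 : ℝ) : S1) :=
        AddCircle.coe_add_period 1 _
      rw [sub_add_cancel] at this
      rw [← this]
      exact hri _ hgyk
    refine hmain g hg hgk p' hp'K hp'k hp'g ?_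
    rcases hcase with ⟨h1, h2⟩ | ⟨h1, h2⟩
    · exact Or.inl ⟨h1.le, h2.le.trans hq1⟩
    · exact Or.inr ⟨hq2.trans h1.le, h2.le⟩
  -- pair lemma
  have pair : ∀ p p' : S1, p ∈ orbit G a → p' ∈ orbit G a → p ≠ k → p' ≠ k → p ≠ p' →
      ((ψ p ∈ Ioo κ (κ+η) ∧ ψ p' ∈ Ioo κ (κ+η)) ∨
       (ψ p ∈ Ioo (κ+1-η) (κ+1) ∧ ψ p' ∈ Ioo (κ+1-η) (κ+1))) →
      (W ∩ orbit G y).Nonempty := by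
    intro p p' hp hp' hpk hp'k hne hsides
    have hpK : p ∈ K := horbK p hp
    have hp'K : p' ∈ K := horbK p' hp'
    have htne : ψ p ≠ ψ p' := by
      intro h
      apply hne
      rw [← hri p hpk, ← hri p' hp'k, h]
    obtain ⟨g, hg, hga⟩ := hp
    obtain ⟨g', hg', hg'a⟩ := hp'
    have hyorb : ∀ h : S1 ≃ₜ S1, h ∈ G → h y ∈ N → (W ∩ orbit G y).Nonempty := by
      intro h hh hmem
      exact ⟨h y, (hNW hmem).1, h, hh, rfl⟩
    rcases hsides with ⟨h1, h2⟩ | ⟨h1, h2⟩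
    · rcases htne.lt_or_gt with hlt | hlt
      · refine hyorb g hg (step g hg (hga ▸ hpk) p' hp'K hp'k ?_ (Or.inl ⟨?_, h2.2⟩))
        · rw [hga]; exact hne.symm
        · rw [hga]; exact hlt
      · refine hyorb g' hg' (step g' hg' (hg'a ▸ hp'k) p hpK hpk ?_ (Or.inl ⟨?_, h1.2⟩))
        · rw [hg'a]; exact hne
        · rw [hg'a]; exact hlt
    · rcases htne.lt_or_gt with hlt | hlt
      · refine hyorb g' hg' (step g' hg' (hg'a ▸ hp'k) p hpK hpk ?_ (Or.inr ⟨h1.1, ?_⟩))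
        · rw [hg'a]; exact hne
        · rw [hg'a]; exact hlt
      · refine hyorb g hg (step g hg (hga ▸ hpk) p' hp'K hp'k ?_ (Or.inr ⟨h2.1, ?_⟩))
        · rw [hga]; exact hne.symm
        · rw [hga]; exact hlt
  -- three points and pigeonhole
  obtain ⟨p₁, hp₁o, hp₁N, hp₁k⟩ := horb N hNopen hkN (fun _ h => h)
  obtain ⟨p₂, hp₂o, hp₂m, hp₂k⟩ := horb (N ∩ {p₁}ᶜ) (hNopen.inter isOpen_compl_singleton)
    ⟨hkN, fun h => hp₁k ((mem_singleton_iff.mp h).symm)⟩ (fun _ h => h.1)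
  obtain ⟨p₃, hp₃o, hp₃m, hp₃k⟩ := horb (N ∩ {p₁}ᶜ ∩ {p₂}ᶜ)
    ((hNopen.inter isOpen_compl_singleton).inter isOpen_compl_singleton)
    ⟨⟨hkN, fun h => hp₁k ((mem_singleton_iff.mp h).symm)⟩,
      fun h => hp₂k ((mem_singleton_iff.mp h).symm)⟩ (fun _ h => h.1.1)
  have hp₂N : p₂ ∈ N := hp₂m.1
  have hp₃N : p₃ ∈ N := hp₃m.1.1
  have h12 : p₁ ≠ p₂ := fun h => hp₂m.2 (mem_singleton_iff.mpr h.symm)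
  have h13 : p₁ ≠ p₃ := fun h => hp₃m.1.2 (mem_singleton_iff.mpr h.symm)
  have h23 : p₂ ≠ p₃ := fun h => hp₃m.2 (mem_singleton_iff.mpr h.symm)
  rcases hside p₁ hp₁N hp₁k with s1 | s1 <;>
    rcases hside p₂ hp₂N hp₂k with s2 | s2 <;>
      rcases hside p₃ hp₃N hp₃k with s3 | s3
  · exact pair p₁ p₂ hp₁o hp₂o hp₁k hp₂k h12 (Or.inl ⟨s1, s2⟩)
  · exact pair p₁ p₂ hp₁o hp₂o hp₁k hp₂k h12 (Or.inl ⟨s1, s2⟩)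
  · exact pair p₁ p₃ hp₁o hp₃o hp₁k hp₃k h13 (Or.inl ⟨s1, s3⟩)
  · exact pair p₂ p₃ hp₂o hp₃o hp₂k hp₃k h23 (Or.inr ⟨s2, s3⟩)
  · exact pair p₂ p₃ hp₂o hp₃o hp₂k hp₃k h23 (Or.inl ⟨s2, s3⟩)
  · exact pair p₁ p₃ hp₁o hp₃o hp₁k hp₃k h13 (Or.inr ⟨s1, s3⟩)
  · exact pair p₁ p₂ hp₁o hp₂o hp₁k hp₂k h12 (Or.inr ⟨s1, s2⟩)
  · exact pair p₁ p₂ hp₁o hp₂o hp₁k hp₂k h12 (Or.inr ⟨s1, s2⟩)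
end
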